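/- The graph K_{4,4} − e, obtained from the complete bipartite graph K_{4,4} by deleting one edge, has 8 vertices and 15 edges and satisfies (K_{4,4} − e) → (P_3, C_8). -/

import Mathlib

open SimpleGraph

/-- `F` contains a copy of `G` (an injective graph homomorphism from `G` to `F`). -/
def Contains {α β : Type*} (F : SimpleGraph α) (G : SimpleGraph β) : Prop :=
  ∃ f : G →g F, Function.Injective f

/-- `F → (G, H)`: for every red/blue coloring of the edges of `F` (given by the spanning
subgraph `R ≤ F` of red edges, the other edges of `F` being blue), there is a red copy of `G`
or a blue copy of `H`. -/
def Arrows {α β γ : Type*} (F : SimpleGraph α) (G : SimpleGraph β) (H : SimpleGraph γ) : Prop :=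
  ∀ R : SimpleGraph α, R ≤ F → Contains R G ∨ Contains (F \ R) H

/-- `K₄,₄ − e`: the complete bipartite graph `K₄,₄` with one edge deleted. -/
def K44e : SimpleGraph (Fin 4 ⊕ Fin 4) :=
  (completeBipartiteGraph (Fin 4) (Fin 4)).deleteEdges {s(Sum.inl 0, Sum.inr 0)}

instance : DecidableRel K44e.Adj := fun a b =>
  decidable_of_iff ((a.isLeft ∧ b.isRight ∨ a.isRight ∧ b.isLeft) ∧
    ¬ s(a, b) = s((Sum.inl 0 : Fin 4 ⊕ Fin 4), Sum.inr 0)) (by rw [K44e]; simp)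

lemma K44e_adj (i j : Fin 4) : K44e.Adj (Sum.inl i) (Sum.inr j) ↔ ¬(i = 0 ∧ j = 0) := by
  rw [K44e]; simp [Sym2.eq_iff]

set_option maxRecDepth 100000 in
set_option maxHeartbeats 2000000 in
lemma key : ∀ σ : Fin 4 → Option (Fin 4),
  σ 0 ≠ some 0 →
  (∀ i i' j, σ i = some j → σ i' = some j → i = i') →
  ∃ a b : Equiv.Perm (Fin 4), ∀ k : Fin 4,
    ((¬(a k = 0 ∧ b k = 0)) ∧ σ (a k) ≠ some (b k)) ∧
    ((¬(a (k+1) = 0 ∧ b k = 0)) ∧ σ (a (k+1)) ≠ some (b k)) := by decide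

/-- The candidate Hamiltonian cycle. -/
def cyc (a b : Fin 4 → Fin 4) : Fin 8 → (Fin 4 ⊕ Fin 4) := fun k =>
  match k with
  | ⟨0,_⟩ => Sum.inl (a 0) | ⟨1,_⟩ => Sum.inr (b 0)
  | ⟨2,_⟩ => Sum.inl (a 1) | ⟨3,_⟩ => Sum.inr (b 1)
  | ⟨4,_⟩ => Sum.inl (a 2) | ⟨5,_⟩ => Sum.inr (b 2)
  | ⟨6,_⟩ => Sum.inl (a 3) | ⟨7,_⟩ => Sum.inr (b 3)

set_option maxHeartbeats 1000000 in
lemma arrows_main : Arrows K44e (pathGraph 3) (cycleGraph 8) := by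
  classical
  intro R hR
  by_cases hP : ∃ x y z, R.Adj x y ∧ R.Adj x z ∧ y ≠ z
  · left
    obtain ⟨x, y, z, hxy, hxz, hyz⟩ := hP
    have h1 : x ≠ y := hxy.ne
    have h2 : x ≠ z := hxz.ne
    have hmap : ∀ u v : Fin 3, (pathGraph 3).Adj u v → R.Adj (![y, x, z] u) (![y, x, z] v) := by
      intro u v huv
      rw [pathGraph_adj] at huv
      fin_cases u <;> fin_cases v <;>
        first
          | exact absurd huv (by decide)
          | exact hxy.symm | exact hxy | exact hxz | exact hxz.symm
    have hif : Function.Injective ![y, x, z] := by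
      intro u v huv
      fin_cases u <;> fin_cases v <;>
        first
          | rfl
          | exact absurd huv.symm h1 | exact absurd huv h1
          | exact absurd huv hyz | exact absurd huv.symm hyz
          | exact absurd huv h2 | exact absurd huv.symm h2
    exact ⟨⟨![y, x, z], fun {u v} h => hmap u v h⟩, hif⟩
  · right
    push_neg at hP
    have h00 : ¬ R.Adj (Sum.inl 0) (Sum.inr 0) := by
      intro h
      have := hR h
      rw [K44e_adj] at this
      exact this ⟨rfl, rfl⟩
    set σ : Fin 4 → Option (Fin 4) := fun i =>
      if h : ∃ j, R.Adj (Sum.inl i) (Sum.inr j) then some h.choose else none with hσ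
    have hσ_adj : ∀ i j, R.Adj (Sum.inl i) (Sum.inr j) → σ i = some j := by
      intro i j h
      have hex : ∃ j', R.Adj (Sum.inl i) (Sum.inr j') := ⟨j, h⟩
      have heq : σ i = some hex.choose := by simp only [hσ]; exact dif_pos hex
      rw [heq]
      exact congrArg some (Sum.inr.inj (hP (Sum.inl i) _ _ hex.choose_spec h))
    have hσ_adj' : ∀ i j, σ i = some j → R.Adj (Sum.inl i) (Sum.inr j) := by
      intro i j h
      simp only [hσ] at h
      by_cases hex : ∃ j', R.Adj (Sum.inl i) (Sum.inr j')
      · rw [dif_pos hex] at h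
        exact (Option.some.inj h) ▸ hex.choose_spec
      · rw [dif_neg hex] at h
        exact absurd h (by simp)
    have h0 : σ 0 ≠ some 0 := fun h => h00 (hσ_adj' 0 0 h)
    have hinj : ∀ i i' j, σ i = some j → σ i' = some j → i = i' := by
      intro i i' j h h'
      exact Sum.inl.inj
        (hP (Sum.inr j) _ _ (hσ_adj' _ _ h).symm (hσ_adj' _ _ h').symm)
    obtain ⟨a, b, hab⟩ := key σ h0 hinj
    have hblue : ∀ i j, ¬(i = 0 ∧ j = 0) → σ i ≠ some j →
        (K44e \ R).Adj (Sum.inl i) (Sum.inr j) := by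
      intro i j hij hsj
      rw [sdiff_adj]
      exact ⟨(K44e_adj i j).2 hij, fun hadj => hsj (hσ_adj _ _ hadj)⟩
    have hstep : ∀ k : Fin 4, (K44e \ R).Adj (Sum.inl (a k)) (Sum.inr (b k)) ∧
        (K44e \ R).Adj (Sum.inl (a (k+1))) (Sum.inr (b k)) := by
      intro k
      obtain ⟨⟨p1, p2⟩, p3, p4⟩ := hab k
      exact ⟨hblue _ _ p1 p2, hblue _ _ p3 p4⟩
    have hmap : ∀ u v : Fin 8, (cycleGraph 8).Adj u v →
        (K44e \ R).Adj (cyc ⇑a ⇑b u) (cyc ⇑a ⇑b v) := by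
      intro u v huv
      rw [cycleGraph_adj] at huv
      fin_cases u <;> fin_cases v <;>
        first
          | exact absurd huv (by decide)
          | exact (hstep 0).1 | exact (hstep 0).1.symm
          | exact (hstep 0).2.symm | exact (hstep 0).2
          | exact (hstep 1).1 | exact (hstep 1).1.symm
          | exact (hstep 1).2.symm | exact (hstep 1).2
          | exact (hstep 2).1 | exact (hstep 2).1.symm
          | exact (hstep 2).2.symm | exact (hstep 2).2
          | exact (hstep 3).1 | exact (hstep 3).1.symm
          | exact (hstep 3).2.symm | exact (hstep 3).2
    have hif : Function.Injective (cyc ⇑a ⇑b) := by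
      intro u v huv
      fin_cases u <;> fin_cases v <;> dsimp only [cyc] at huv <;>
        first
          | rfl
          | exact absurd huv Sum.inl_ne_inr | exact absurd huv Sum.inr_ne_inl
          | exact absurd (a.injective (Sum.inl.inj huv)) (by decide)
          | exact absurd (b.injective (Sum.inr.inj huv)) (by decide)
    exact ⟨⟨cyc ⇑a ⇑b, fun {u v} h => hmap u v h⟩, hif⟩

theorem stmt_13 : Fintype.card (Fin 4 ⊕ Fin 4) = 8 ∧ K44e.edgeSet.ncard = 15 ∧
    Arrows K44e (pathGraph 3) (cycleGraph 8) := by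
  refine ⟨by decide, ?_, arrows_main⟩
  have h2 : ∑ v, K44e.degree v = 2 * K44e.edgeFinset.card :=
    K44e.sum_degrees_eq_twice_card_edges
  have h1 : ∑ v, K44e.degree v = 30 := by decide
  rw [Set.ncard_eq_toFinset_card']
  have h3 : K44e.edgeSet.toFinset = K44e.edgeFinset := rfl
  rw [h3]; omega
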